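/- If T is a symmetric 2-tensor satisfying Pol(T)|_{Σ₀} = 0 and Pol(ℒ₀ T) = 0 everywhere, where ℒ₀ = −2 D_{L₀} + (□_{g₀}u₀) and the background null frame satisfies the structure equations D_{L₀}L₀ = 0, D_{L₀}L̄₀ = 2ζ̄_A e_A, D_{L₀}e_A = ζ̄_A L₀ + ∇̸_{L₀} e_A (with g₀(∇̸_{L₀}e_A, e_B) antisymmetric in A,B and ζ̄_A, g₀(∇̸_{L₀}e_A,e_B) bounded), and T is compactly supported with enough regularity, then Pol(T) = 0 everywhere. -/

import Mathlib

noncomputable section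

/-- Spacetime `ℝ × ℝ³` (the domain `[0,1] × ℝ³` sits inside it). -/
abbrev Spt : Type := ℝ × (Fin 3 → ℝ)

/-- A vector given by its four coordinate components, as a spacetime direction. -/
def iotaVec (v : Fin 4 → ℝ) : Spt := (v 0, fun i => v (Fin.succ i))

/-- Directional (coordinate) derivative of a scalar function along the vector field `X`. -/
def dirDeriv (X : Spt → Fin 4 → ℝ) (f : Spt → ℝ) (p : Spt) : ℝ :=
  fderiv ℝ f p (iotaVec (X p))

/-- Covariant derivative of a vector field `X` along `L`, with Christoffel symbols `Γ`:
`(D_L X)^α = L(X^α) + L^ρ Γ^α_{ρν} X^ν`. -/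
def covDerVec (Γ : Spt → Fin 4 → Fin 4 → Fin 4 → ℝ) (L X : Spt → Fin 4 → ℝ)
    (p : Spt) (α : Fin 4) : ℝ :=
  dirDeriv L (fun q => X q α) p + ∑ ρ, ∑ ν, L p ρ * Γ p α ρ ν * X p ν

/-- Covariant derivative of a 2-tensor `T` along `L`:
`(D_L T)_{αβ} = L(T_{αβ}) − L^ρΓ^ν_{ρα}T_{νβ} − L^ρΓ^ν_{ρβ}T_{αν}`. -/
def covDerTen (Γ : Spt → Fin 4 → Fin 4 → Fin 4 → ℝ) (L : Spt → Fin 4 → ℝ)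
    (T : Spt → Fin 4 → Fin 4 → ℝ) (p : Spt) (α β : Fin 4) : ℝ :=
  dirDeriv L (fun q => T q α β) p - (∑ ρ, ∑ ν, L p ρ * Γ p ν ρ α * T p ν β) -
    ∑ ρ, ∑ ν, L p ρ * Γ p ν ρ β * T p α ν

/-- Contraction `T(X,Y) = T_{αβ} X^α Y^β`. -/
def contract2 (T : Spt → Fin 4 → Fin 4 → ℝ) (X Y : Spt → Fin 4 → ℝ) (p : Spt) : ℝ :=
  ∑ α, ∑ β, T p α β * X p α * Y p β

/-- The transport operator `ℒ₀ T = −2 D_{L₀} T + (□_{g₀}u₀) T`. -/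
def transportOp (Γ : Spt → Fin 4 → Fin 4 → Fin 4 → ℝ) (L : Spt → Fin 4 → ℝ)
    (bbox : Spt → ℝ) (T : Spt → Fin 4 → Fin 4 → ℝ) : Spt → Fin 4 → Fin 4 → ℝ :=
  fun p α β => -2 * covDerTen Γ L T p α β + bbox p * T p α β

/-- Null-frame component `Pol_{L₀}(T) = −T_{L₀L₀}`. -/
def polLComp (L : Spt → Fin 4 → ℝ) (T : Spt → Fin 4 → Fin 4 → ℝ) (p : Spt) : ℝ :=
  -(contract2 T L L p)

/-- Null-frame component `Pol_A(T) = −T_{AL₀}`. -/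
def polAComp (eA L : Spt → Fin 4 → ℝ) (T : Spt → Fin 4 → Fin 4 → ℝ) (p : Spt) : ℝ :=
  -(contract2 T eA L p)

/-- Null-frame component `Pol_{L̄₀}(T) = −δ^{AB}T_{AB}`. -/
def polLbComp (e1 e2 : Spt → Fin 4 → ℝ) (T : Spt → Fin 4 → Fin 4 → ℝ) (p : Spt) : ℝ :=
  -(contract2 T e1 e1 p + contract2 T e2 e2 p)

/-- Auxiliary: the Christoffel terms cancel in the Leibniz rule for the contraction of a
covariantly differentiated 2-tensor against covariantly differentiated vector fields. -/
lemma leibniz4 (Lp Xp Yp dX dY : Fin 4 → ℝ) (Γp : Fin 4 → Fin 4 → Fin 4 → ℝ)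
    (Tp dT : Fin 4 → Fin 4 → ℝ) :
    ∑ α, ∑ β, (dT α β * Xp α * Yp β + Tp α β * dX α * Yp β + Tp α β * Xp α * dY β)
      = (∑ α, ∑ β, (dT α β - (∑ ρ, ∑ ν, Lp ρ * Γp ν ρ α * Tp ν β)
            - ∑ ρ, ∑ ν, Lp ρ * Γp ν ρ β * Tp α ν) * Xp α * Yp β)
        + (∑ α, ∑ β, Tp α β * (dX α + ∑ ρ, ∑ ν, Lp ρ * Γp α ρ ν * Xp ν) * Yp β)
        + ∑ α, ∑ β, Tp α β * Xp α * (dY β + ∑ ρ, ∑ ν, Lp ρ * Γp β ρ ν * Yp ν) := by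
  simp only [Fin.sum_univ_four]
  ring

/-- Auxiliary: triangle-inequality bound for a three-term linear expression. -/
lemma abs_three_bound (a1 a2 a3 u1 u2 u3 d B : ℝ) (h1 : |a1| ≤ B) (h2 : |a2| ≤ 2*B)
    (h3 : |a3| ≤ 2*B) (hu1 : |u1| ≤ d) (hu2 : |u2| ≤ d) (hu3 : |u3| ≤ d)
    (hd : 0 ≤ d) (hB : 0 ≤ B) :
    |a1*u1 + a2*u2 + a3*u3| ≤ 5*B*d := by
  calc |a1*u1 + a2*u2 + a3*u3| ≤ |a1*u1| + |a2*u2| + |a3*u3| := abs_add_three _ _ _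
    _ = |a1| * |u1| + |a2| * |u2| + |a3| * |u3| := by rw [abs_mul, abs_mul, abs_mul]
    _ ≤ B*d + (2*B)*d + (2*B)*d := by
        gcongr <;> first | exact abs_nonneg _ | assumption
    _ = 5*B*d := by ring
/-- Propagation of polarization: if `T` is a symmetric 2-tensor with `Pol(T) = 0` on `Σ₀`
and `Pol(ℒ₀ T) = 0` everywhere, where `ℒ₀ = −2D_{L₀} + □_{g₀}u₀`, and the background null
frame satisfies the structure equations `D_{L₀}L₀ = 0`, `D_{L₀}L̄₀ = 2ζ̄_A e_A`,
`D_{L₀}e_A = ζ̄_A L₀ + ∇̸_{L₀}e_A` (with `g₀(∇̸_{L₀}e_A,e_B)` antisymmetric and bounded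
coefficients), and `T` is compactly supported with enough regularity, then
`Pol(T) = 0` on `[0,1] × ℝ³`. -/
theorem stmt_17 (c B : ℝ) (hc : 0 < c) (hB : 0 < B)
    (Γ : Spt → Fin 4 → Fin 4 → Fin 4 → ℝ)
    (L Lb e1 e2 : Spt → Fin 4 → ℝ)
    (ζ1 ζ2 ω bbox : Spt → ℝ)
    (T : Spt → Fin 4 → Fin 4 → ℝ)
    (hΓcont : ∀ α ρ ν, Continuous fun p => Γ p α ρ ν)
    (hΓbd : ∀ p α ρ ν, |Γ p α ρ ν| ≤ B)
    (hLreg : ∀ α, ContDiff ℝ 1 fun p => L p α)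
    (hLbreg : ∀ α, ContDiff ℝ 1 fun p => Lb p α)
    (he1reg : ∀ α, ContDiff ℝ 1 fun p => e1 p α)
    (he2reg : ∀ α, ContDiff ℝ 1 fun p => e2 p α)
    (hLbd : ∀ p α, |L p α| ≤ B ∧ |Lb p α| ≤ B ∧ |e1 p α| ≤ B ∧ |e2 p α| ≤ B)
    (hLt : ∀ p, c ≤ L p 0)
    (hLder : ∀ p α, ‖fderiv ℝ (fun q => L q α) p‖ ≤ B)
    (hcoefcont : Continuous ζ1 ∧ Continuous ζ2 ∧ Continuous ω ∧ Continuous bbox)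
    (hcoefbd : ∀ p, |ζ1 p| ≤ B ∧ |ζ2 p| ≤ B ∧ |ω p| ≤ B ∧ |bbox p| ≤ B)
    (hgeo : ∀ p α, covDerVec Γ L L p α = 0)
    (hDLb : ∀ p α, covDerVec Γ L Lb p α = 2 * (ζ1 p * e1 p α + ζ2 p * e2 p α))
    (hDe1 : ∀ p α, covDerVec Γ L e1 p α = ζ1 p * L p α + ω p * e2 p α)
    (hDe2 : ∀ p α, covDerVec Γ L e2 p α = ζ2 p * L p α - ω p * e1 p α)
    (hTreg : ∀ α β, ContDiff ℝ 1 fun p => T p α β)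
    (hTsym : ∀ p α β, T p α β = T p β α)
    (hTsupp : ∃ R : ℝ, ∀ (t : ℝ) (x : Fin 3 → ℝ) (α β : Fin 4),
      R < ‖x‖ → T (t, x) α β = 0)
    (hPol0 : ∀ x : Fin 3 → ℝ,
      polLComp L T (0, x) = 0 ∧ polAComp e1 L T (0, x) = 0 ∧
        polAComp e2 L T (0, x) = 0 ∧ polLbComp e1 e2 T (0, x) = 0)
    (hPolTrans : ∀ p : Spt,
      polLComp L (transportOp Γ L bbox T) p = 0 ∧
        polAComp e1 L (transportOp Γ L bbox T) p = 0 ∧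
        polAComp e2 L (transportOp Γ L bbox T) p = 0 ∧
        polLbComp e1 e2 (transportOp Γ L bbox T) p = 0) :
    ∀ t ∈ Set.Icc (0 : ℝ) 1, ∀ x : Fin 3 → ℝ,
      polLComp L T (t, x) = 0 ∧ polAComp e1 L T (t, x) = 0 ∧
        polAComp e2 L T (t, x) = 0 ∧ polLbComp e1 e2 T (t, x) = 0 := by
  intro t ht x
  set p : Spt := (t, x) with hpdef
  -- basic differentiability
  have hTd : ∀ α β, Differentiable ℝ fun q => T q α β := fun α β => (hTreg α β).differentiable one_ne_zero
  have hLd : ∀ α, Differentiable ℝ fun q => L q α := fun α => (hLreg α).differentiable one_ne_zero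
  have he1d : ∀ α, Differentiable ℝ fun q => e1 q α := fun α => (he1reg α).differentiable one_ne_zero
  have he2d : ∀ α, Differentiable ℝ fun q => e2 q α := fun α => (he2reg α).differentiable one_ne_zero
  -- the coordinate vector field of L and its properties
  have hVd : Differentiable ℝ fun q : Spt => iotaVec (L q) := by
    have h2 : Differentiable ℝ fun q : Spt => (fun i : Fin 3 => L q (Fin.succ i)) := by
      rw [differentiable_pi]; exact fun i => hLd _
    exact (hLd 0).prodMk h2
  have hVfb : ∀ q : Spt, ‖fderiv ℝ (fun q : Spt => iotaVec (L q)) q‖ ≤ B := by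
    intro q
    have hF : HasFDerivAt (fun q : Spt => iotaVec (L q))
        ((fderiv ℝ (fun r => L r 0) q).prod
          (ContinuousLinearMap.pi fun i : Fin 3 => fderiv ℝ (fun r => L r (Fin.succ i)) q)) q := by
      refine HasFDerivAt.prodMk ((hLd 0 q).hasFDerivAt) ?_
      exact hasFDerivAt_pi.mpr fun i => (hLd (Fin.succ i) q).hasFDerivAt
    rw [hF.fderiv]
    refine ContinuousLinearMap.opNorm_le_bound _ hB.le fun w => ?_
    rw [ContinuousLinearMap.prod_apply, Prod.norm_def]
    refine max_le ?_ ?_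
    · exact ((fderiv ℝ (fun r => L r 0) q).le_opNorm w).trans
        (mul_le_mul_of_nonneg_right (hLder q 0) (norm_nonneg w))
    · refine (pi_norm_le_iff_of_nonneg (by positivity)).mpr fun i => ?_
      simp only [ContinuousLinearMap.pi_apply]
      exact ((fderiv ℝ (fun r => L r (Fin.succ i)) q).le_opNorm w).trans
        (mul_le_mul_of_nonneg_right (hLder q _) (norm_nonneg w))
  have hVlip : LipschitzWith ⟨B, hB.le⟩ (fun q : Spt => iotaVec (L q)) := by
    refine lipschitzWith_of_nnnorm_fderiv_le hVd fun q => ?_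
    exact NNReal.coe_le_coe.mp (by rw [coe_nnnorm]; exact hVfb q)
  have hVn : ∀ q : Spt, ‖iotaVec (L q)‖ ≤ B := by
    intro q
    rw [Prod.norm_def]
    refine max_le ?_ ?_
    · show ‖L q 0‖ ≤ B
      rw [Real.norm_eq_abs]; exact (hLbd q 0).1
    · refine (pi_norm_le_iff_of_nonneg hB.le).mpr fun i => ?_
      show ‖L q (Fin.succ i)‖ ≤ B
      rw [Real.norm_eq_abs]; exact (hLbd q _).1
  -- solve the flow ODE backwards in time
  set a : ℝ := 2 / c with hadef
  have ha : (0:ℝ) < a := by rw [hadef]; positivity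
  have hpl : IsPicardLindelof (fun _ q => iotaVec (L q)) (tmin := -a) (tmax := 0)
      ⟨0, by constructor <;> linarith⟩ p ⟨B * a, by positivity⟩ 0 ⟨B, hB.le⟩ ⟨B, hB.le⟩ :=
    { lipschitzOnWith := fun _ _ => hVlip.lipschitzOnWith
      continuousOn := fun _ _ => continuousOn_const
      norm_le := fun _ _ q _ => hVn q
      mul_max_le := by
        show B * max ((0:ℝ) - 0) (0 - -a) ≤ B * a - 0
        rw [sub_self, zero_sub, neg_neg, max_eq_right ha.le, sub_zero] }
  obtain ⟨γ, hγinit0, hγ'⟩ := hpl.exists_eq_forall_mem_Icc_hasDerivWithinAt₀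
  have hγinit : γ 0 = p := hγinit0
  have hγd : ∀ s ∈ Set.Icc (-a) 0,
      HasDerivWithinAt γ (iotaVec (L (γ s))) (Set.Icc (-a) 0) s := hγ'
  -- chain rule along the flow
  have hchain : ∀ (g : Spt → ℝ), Differentiable ℝ g → ∀ s ∈ Set.Icc (-a) 0,
      HasDerivWithinAt (fun s' => g (γ s')) (dirDeriv L g (γ s)) (Set.Icc (-a) 0) s := by
    intro g hg s hs
    have h := (hg (γ s)).hasFDerivAt.comp_hasDerivWithinAt s (hγd s hs)
    exact h
  -- the time coordinate along the flow
  have hτ : ∀ s ∈ Set.Icc (-a) 0,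
      HasDerivWithinAt (fun s' => (γ s').1) (L (γ s) 0) (Set.Icc (-a) 0) s := by
    intro s hs
    have h := (ContinuousLinearMap.fst ℝ ℝ (Fin 3 → ℝ)).hasFDerivAt.comp_hasDerivWithinAt
      s (hγd s hs)
    exact h
  have hτc : ContinuousOn (fun s' => (γ s').1) (Set.Icc (-a) 0) :=
    fun s hs => (hτ s hs).continuousWithinAt
  have hφd : ∀ s ∈ Set.Ioo (-a) 0,
      HasDerivAt (fun s' => (γ s').1 - c * s') (L (γ s) 0 - c) s := by
    intro s hs
    have h1 := (hτ s (Set.Ioo_subset_Icc_self hs)).hasDerivAt (Icc_mem_nhds hs.1 hs.2)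
    have h2 : HasDerivAt (fun s' : ℝ => c * s') c s := by
      simpa using (hasDerivAt_id s).const_mul c
    exact h1.sub h2
  have hφmono : MonotoneOn (fun s' => (γ s').1 - c * s') (Set.Icc (-a) 0) := by
    apply monotoneOn_of_deriv_nonneg (convex_Icc _ _)
    · exact hτc.sub ((continuous_const.mul continuous_id).continuousOn)
    · rw [interior_Icc]
      exact fun s hs => (hφd s hs).differentiableAt.differentiableWithinAt
    · rw [interior_Icc]
      intro s hs
      rw [(hφd s hs).deriv]
      have := hLt (γ s); linarith
  have hγ0t : (γ 0).1 = t := by rw [hγinit]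
  have hca : c * a = 2 := by rw [hadef]; field_simp
  have hτa : (γ (-a)).1 ≤ t - 2 := by
    have h := hφmono (Set.left_mem_Icc.mpr (by linarith)) (Set.right_mem_Icc.mpr (by linarith))
      (by linarith)
    have h' : c * (-a) = -2 := by rw [mul_neg, hca]
    simp only at h
    rw [hγ0t] at h
    linarith
  have hmem : (0:ℝ) ∈ Set.Icc ((γ (-a)).1) ((γ 0).1) := by
    constructor
    · have := ht.2; linarith
    · rw [hγ0t]; exact ht.1
  obtain ⟨s₀, hs₀mem, hs₀⟩ := intermediate_value_Icc (by linarith : -a ≤ (0:ℝ)) hτc hmem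
  have hs₀gt : -a < s₀ := by
    rcases lt_or_eq_of_le hs₀mem.1 with h | h
    · exact h
    · exfalso; rw [← h] at hs₀; have := ht.2; linarith
  -- transport identities from the polarization hypothesis
  have hTrans : ∀ (r : Spt) (X Y : Spt → Fin 4 → ℝ),
      contract2 (transportOp Γ L bbox T) X Y r
        = -2 * contract2 (covDerTen Γ L T) X Y r + bbox r * contract2 T X Y r := by
    intro r X Y
    simp only [contract2, transportOp, Fin.sum_univ_four]
    ring
  have hA1 : ∀ r : Spt,
      contract2 (covDerTen Γ L T) L L r = bbox r / 2 * contract2 T L L r := by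
    intro r
    have h := (hPolTrans r).1
    rw [polLComp, hTrans] at h
    linarith
  have hA2 : ∀ r : Spt,
      contract2 (covDerTen Γ L T) e1 L r = bbox r / 2 * contract2 T e1 L r := by
    intro r
    have h := (hPolTrans r).2.1
    rw [polAComp, hTrans] at h
    linarith
  have hA3 : ∀ r : Spt,
      contract2 (covDerTen Γ L T) e2 L r = bbox r / 2 * contract2 T e2 L r := by
    intro r
    have h := (hPolTrans r).2.2.1
    rw [polAComp, hTrans] at h
    linarith
  have hA4 : ∀ r : Spt,
      contract2 (covDerTen Γ L T) e1 e1 r + contract2 (covDerTen Γ L T) e2 e2 r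
        = bbox r / 2 * (contract2 T e1 e1 r + contract2 T e2 e2 r) := by
    intro r
    have h := (hPolTrans r).2.2.2
    rw [polLbComp, hTrans, hTrans] at h
    linarith
  -- the Leibniz rule for contractions along the flow
  have hC : ∀ (X Y : Spt → Fin 4 → ℝ), (∀ α, Differentiable ℝ fun r => X r α) →
      (∀ α, Differentiable ℝ fun r => Y r α) → ∀ s ∈ Set.Icc (-a) 0,
      HasDerivWithinAt (fun s' => contract2 T X Y (γ s'))
        (contract2 (covDerTen Γ L T) X Y (γ s)
          + (∑ α, ∑ β, T (γ s) α β * covDerVec Γ L X (γ s) α * Y (γ s) β)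
          + ∑ α, ∑ β, T (γ s) α β * X (γ s) α * covDerVec Γ L Y (γ s) β)
        (Set.Icc (-a) 0) s := by
    intro X Y hX hY s hs
    have h1 : HasDerivWithinAt (fun s' => ∑ α, ∑ β, T (γ s') α β * X (γ s') α * Y (γ s') β)
        (∑ α, ∑ β, (dirDeriv L (fun q => T q α β) (γ s) * X (γ s) α * Y (γ s) β
          + T (γ s) α β * dirDeriv L (fun q => X q α) (γ s) * Y (γ s) β
          + T (γ s) α β * X (γ s) α * dirDeriv L (fun q => Y q β) (γ s)))
        (Set.Icc (-a) 0) s := by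
      refine HasDerivWithinAt.fun_sum fun α _ => ?_
      refine HasDerivWithinAt.fun_sum fun β _ => ?_
      have hT' := hchain (fun q => T q α β) (hTd α β) s hs
      have hX' := hchain (fun q => X q α) (hX α) s hs
      have hY' := hchain (fun q => Y q β) (hY β) s hs
      have h2 := (hT'.fun_mul hX').fun_mul hY'
      refine h2.congr_deriv (Eq.symm ?_)
      ring
    simp only [contract2]
    convert h1 using 1
    simp only [covDerTen, covDerVec]
    exact (leibniz4 (L (γ s)) (X (γ s)) (Y (γ s))
      (fun α => dirDeriv L (fun q => X q α) (γ s))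
      (fun β => dirDeriv L (fun q => Y q β) (γ s))
      (Γ (γ s)) (T (γ s)) (fun α β => dirDeriv L (fun q => T q α β) (γ s))).symm
  -- the polarization vector and the linear transport system
  set y : ℝ → Fin 4 → ℝ := fun s => ![polLComp L T (γ s), polAComp e1 L T (γ s),
    polAComp e2 L T (γ s), polLbComp e1 e2 T (γ s)] with hydef
  set v : ℝ → (Fin 4 → ℝ) → (Fin 4 → ℝ) := fun s w =>
    ![bbox (γ s) / 2 * w 0,
      bbox (γ s) / 2 * w 1 + ζ1 (γ s) * w 0 + ω (γ s) * w 2,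
      bbox (γ s) / 2 * w 2 + ζ2 (γ s) * w 0 - ω (γ s) * w 1,
      bbox (γ s) / 2 * w 3 + 2 * ζ1 (γ s) * w 1 + 2 * ζ2 (γ s) * w 2] with hvdef
  have hy' : ∀ s ∈ Set.Icc (-a) 0, HasDerivWithinAt y (v s (y s)) (Set.Icc (-a) 0) s := by
    intro s hs
    have hc0 : HasDerivWithinAt (fun s' => polLComp L T (γ s'))
        (bbox (γ s) / 2 * polLComp L T (γ s)) (Set.Icc (-a) 0) s := by
      simp only [polLComp]
      have h := (hC L L hLd hLd s hs).fun_neg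
      refine h.congr_deriv (Eq.symm ?_)
      simp only [hgeo, mul_zero, zero_mul, Finset.sum_const_zero, add_zero]
      linear_combination hA1 (γ s)
    have hc1 : HasDerivWithinAt (fun s' => polAComp e1 L T (γ s'))
        (bbox (γ s) / 2 * polAComp e1 L T (γ s) + ζ1 (γ s) * polLComp L T (γ s)
          + ω (γ s) * polAComp e2 L T (γ s)) (Set.Icc (-a) 0) s := by
      simp only [polLComp, polAComp]
      have h := (hC e1 L he1d hLd s hs).fun_neg
      refine h.congr_deriv (Eq.symm ?_)
      have hA := hA2 (γ s)
      simp only [hgeo, hDe1, mul_zero, zero_mul, Finset.sum_const_zero, add_zero]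
      simp only [contract2, Fin.sum_univ_four] at hA ⊢
      linear_combination hA
    have hc2 : HasDerivWithinAt (fun s' => polAComp e2 L T (γ s'))
        (bbox (γ s) / 2 * polAComp e2 L T (γ s) + ζ2 (γ s) * polLComp L T (γ s)
          - ω (γ s) * polAComp e1 L T (γ s)) (Set.Icc (-a) 0) s := by
      simp only [polLComp, polAComp]
      have h := (hC e2 L he2d hLd s hs).fun_neg
      refine h.congr_deriv (Eq.symm ?_)
      have hA := hA3 (γ s)
      simp only [hgeo, hDe2, mul_zero, zero_mul, Finset.sum_const_zero, add_zero]
      simp only [contract2, Fin.sum_univ_four] at hA ⊢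
      linear_combination hA
    have hc3 : HasDerivWithinAt (fun s' => polLbComp e1 e2 T (γ s'))
        (bbox (γ s) / 2 * polLbComp e1 e2 T (γ s) + 2 * ζ1 (γ s) * polAComp e1 L T (γ s)
          + 2 * ζ2 (γ s) * polAComp e2 L T (γ s)) (Set.Icc (-a) 0) s := by
      simp only [polLbComp, polAComp]
      have h := ((hC e1 e1 he1d he1d s hs).fun_add (hC e2 e2 he2d he2d s hs)).fun_neg
      refine h.congr_deriv (Eq.symm ?_)
      have hA := hA4 (γ s)
      simp only [hDe1, hDe2]
      simp only [contract2, Fin.sum_univ_four] at hA ⊢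
      rw [hTsym (γ s) 1 0, hTsym (γ s) 2 0, hTsym (γ s) 2 1, hTsym (γ s) 3 0,
        hTsym (γ s) 3 1, hTsym (γ s) 3 2] at hA ⊢
      linear_combination hA
    rw [hasDerivWithinAt_pi]
    intro i
    fin_cases i
    · exact hc0
    · exact hc1
    · exact hc2
    · exact hc3
  -- uniqueness for the linear transport ODE, via Grönwall
  have hK5 : (0:ℝ) ≤ 5 * B := by positivity
  have hvlip : ∀ s, LipschitzWith ⟨5 * B, hK5⟩ (v s) := by
    intro s
    apply LipschitzWith.of_dist_le_mul
    intro w w'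
    have hd : (0:ℝ) ≤ dist w w' := dist_nonneg
    have h0 := dist_le_pi_dist w w' 0
    have h1 := dist_le_pi_dist w w' 1
    have h2 := dist_le_pi_dist w w' 2
    have h3 := dist_le_pi_dist w w' 3
    rw [Real.dist_eq] at h0 h1 h2 h3
    obtain ⟨hz1, hz2, hw, hbb⟩ := hcoefbd (γ s)
    have hb2 : |bbox (γ s) / 2| ≤ B := by
      rw [abs_div, abs_two]; linarith [abs_nonneg (bbox (γ s))]
    have habs0 : |(0:ℝ)| ≤ 2 * B := by rw [abs_zero]; linarith
    have k0 : dist (bbox (γ s) / 2 * w 0) (bbox (γ s) / 2 * w' 0) ≤ 5 * B * dist w w' := by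
      rw [Real.dist_eq]
      have he : bbox (γ s) / 2 * w 0 - bbox (γ s) / 2 * w' 0
          = bbox (γ s) / 2 * (w 0 - w' 0) + 0 * (w 1 - w' 1) + 0 * (w 2 - w' 2) := by ring
      rw [he]
      exact abs_three_bound _ _ _ _ _ _ _ _ hb2 habs0 habs0 h0 h1 h2 hd hB.le
    have k1 : dist (bbox (γ s) / 2 * w 1 + ζ1 (γ s) * w 0 + ω (γ s) * w 2)
        (bbox (γ s) / 2 * w' 1 + ζ1 (γ s) * w' 0 + ω (γ s) * w' 2) ≤ 5 * B * dist w w' := by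
      rw [Real.dist_eq]
      have he : (bbox (γ s) / 2 * w 1 + ζ1 (γ s) * w 0 + ω (γ s) * w 2)
            - (bbox (γ s) / 2 * w' 1 + ζ1 (γ s) * w' 0 + ω (γ s) * w' 2)
          = bbox (γ s) / 2 * (w 1 - w' 1) + ζ1 (γ s) * (w 0 - w' 0)
            + ω (γ s) * (w 2 - w' 2) := by ring
      rw [he]
      exact abs_three_bound _ _ _ _ _ _ _ _ hb2 (by linarith) (by linarith) h1 h0 h2 hd hB.le
    have k2 : dist (bbox (γ s) / 2 * w 2 + ζ2 (γ s) * w 0 - ω (γ s) * w 1)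
        (bbox (γ s) / 2 * w' 2 + ζ2 (γ s) * w' 0 - ω (γ s) * w' 1) ≤ 5 * B * dist w w' := by
      rw [Real.dist_eq]
      have he : (bbox (γ s) / 2 * w 2 + ζ2 (γ s) * w 0 - ω (γ s) * w 1)
            - (bbox (γ s) / 2 * w' 2 + ζ2 (γ s) * w' 0 - ω (γ s) * w' 1)
          = bbox (γ s) / 2 * (w 2 - w' 2) + ζ2 (γ s) * (w 0 - w' 0)
            + (-(ω (γ s))) * (w 1 - w' 1) := by ring
      rw [he]
      refine abs_three_bound _ _ _ _ _ _ _ _ hb2 (by linarith) ?_ h2 h0 h1 hd hB.le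
      rw [abs_neg]; linarith
    have k3 : dist (bbox (γ s) / 2 * w 3 + 2 * ζ1 (γ s) * w 1 + 2 * ζ2 (γ s) * w 2)
        (bbox (γ s) / 2 * w' 3 + 2 * ζ1 (γ s) * w' 1 + 2 * ζ2 (γ s) * w' 2)
        ≤ 5 * B * dist w w' := by
      rw [Real.dist_eq]
      have he : (bbox (γ s) / 2 * w 3 + 2 * ζ1 (γ s) * w 1 + 2 * ζ2 (γ s) * w 2)
            - (bbox (γ s) / 2 * w' 3 + 2 * ζ1 (γ s) * w' 1 + 2 * ζ2 (γ s) * w' 2)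
          = bbox (γ s) / 2 * (w 3 - w' 3) + 2 * ζ1 (γ s) * (w 1 - w' 1)
            + 2 * ζ2 (γ s) * (w 2 - w' 2) := by ring
      rw [he]
      refine abs_three_bound _ _ _ _ _ _ _ _ hb2 ?_ ?_ h3 h1 h2 hd hB.le
      · rw [abs_mul, abs_two]; linarith
      · rw [abs_mul, abs_two]; linarith
    show dist (v s w) (v s w') ≤ 5 * B * dist w w'
    refine (dist_pi_le_iff (by positivity)).mpr fun i => ?_
    fin_cases i
    · exact k0
    · exact k1
    · exact k2
    · exact k3
  have hsub : Set.Icc s₀ 0 ⊆ Set.Icc (-a) 0 := Set.Icc_subset_Icc hs₀mem.1 le_rfl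
  have hzero : ∀ s', v s' (0 : Fin 4 → ℝ) = 0 := by
    intro s'
    funext i
    have z0 : bbox (γ s') / 2 * (0:ℝ) = 0 := by ring
    have z1 : bbox (γ s') / 2 * (0:ℝ) + ζ1 (γ s') * 0 + ω (γ s') * 0 = 0 := by ring
    have z2 : bbox (γ s') / 2 * (0:ℝ) + ζ2 (γ s') * 0 - ω (γ s') * 0 = 0 := by ring
    have z3 : bbox (γ s') / 2 * (0:ℝ) + 2 * ζ1 (γ s') * 0 + 2 * ζ2 (γ s') * 0 = 0 := by ring
    fin_cases i
    · exact z0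
    · exact z1
    · exact z2
    · exact z3
  have heq : Set.EqOn y (fun _ => (0 : Fin 4 → ℝ)) (Set.Icc s₀ 0) := by
    apply ODE_solution_unique (K := ⟨5 * B, hK5⟩) hvlip
    · exact fun s hs => ((hy' s (hsub hs)).continuousWithinAt).mono hsub
    · intro s hs
      refine (hy' s (hsub (Set.Ico_subset_Icc_self hs))).mono_of_mem_nhdsWithin ?_
      refine Filter.mem_of_superset (Icc_mem_nhdsGE hs.2) ?_
      exact Set.Icc_subset_Icc (by linarith [hs₀gt, hs.1]) le_rfl
    · exact continuousOn_const
    · intro s hs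
      have : v s ((fun _ => (0 : Fin 4 → ℝ)) s) = 0 := hzero s
      rw [this]
      exact hasDerivWithinAt_const _ _ _
    · have hpt : γ s₀ = ((0:ℝ), (γ s₀).2) := by rw [← hs₀]
      obtain ⟨h0, h1, h2, h3⟩ := hPol0 (γ s₀).2
      rw [← hpt] at h0 h1 h2 h3
      funext i
      fin_cases i
      · exact h0
      · exact h1
      · exact h2
      · exact h3
  have h00 : y 0 = 0 := heq ⟨hs₀mem.2, le_rfl⟩
  have g0 : polLComp L T (γ 0) = 0 := congrFun h00 0
  have g1 : polAComp e1 L T (γ 0) = 0 := congrFun h00 1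
  have g2 : polAComp e2 L T (γ 0) = 0 := congrFun h00 2
  have g3 : polLbComp e1 e2 T (γ 0) = 0 := congrFun h00 3
  rw [hγinit] at g0 g1 g2 g3
  exact ⟨g0, g1, g2, g3⟩
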